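/- Let M ∈ SL(2,ℂ) with |tr M| ≤ C for some C ≥ 1, and let x ∈ ℂ² with ‖x‖ = 1. Then max(‖M²x‖, ‖Mx‖) ≥ (1/2)·min(1, 1/C). -/

import Mathlib

private lemma ch_aux (a b c d : ℂ) (h : a * d - b * c = 1) :
    (!![a, b; c, d]) ^ 2 = (a + d) • !![a, b; c, d] - 1 := by
  ext i j
  fin_cases i <;> fin_cases j <;>
    simp [pow_two, Matrix.mul_apply, Fin.sum_univ_two, Matrix.one_apply] <;>
    first | ring1 | linear_combination -h

theorem two_block_gordon_estimate (M : Matrix (Fin 2) (Fin 2) ℂ) (hM : M.det = 1)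
    (C : ℝ) (hC : 1 ≤ C) (htr : ‖M.trace‖ ≤ C)
    (x : EuclideanSpace ℂ (Fin 2)) (hx : ‖x‖ = 1) :
    max ‖Matrix.toEuclideanLin (M ^ 2) x‖ ‖Matrix.toEuclideanLin M x‖ ≥
      (1 / 2) * min 1 (1 / C) := by
  have hCH : M ^ 2 = M.trace • M - 1 := by
    have hdet : M 0 0 * M 1 1 - M 0 1 * M 1 0 = 1 := by
      rw [← Matrix.det_fin_two]; exact hM
    have := ch_aux (M 0 0) (M 0 1) (M 1 0) (M 1 1) hdet
    rw [← Matrix.eta_fin_two M] at this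
    rw [this, Matrix.trace_fin_two]
  have key : Matrix.toEuclideanLin (M ^ 2) x = M.trace • (Matrix.toEuclideanLin M x) - x := by
    rw [hCH, map_sub, map_smul]
    simp [Matrix.toEuclideanLin_apply]
  have h1 : (1 : ℝ) ≤ ‖M.trace‖ * ‖Matrix.toEuclideanLin M x‖ +
      ‖Matrix.toEuclideanLin (M ^ 2) x‖ := by
    have : x = M.trace • (Matrix.toEuclideanLin M x) - Matrix.toEuclideanLin (M ^ 2) x := by
      rw [key]; abel
    calc (1:ℝ) = ‖x‖ := hx.symm
      _ = ‖M.trace • (Matrix.toEuclideanLin M x) - Matrix.toEuclideanLin (M ^ 2) x‖ := by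
          rw [← this]
      _ ≤ ‖M.trace • (Matrix.toEuclideanLin M x)‖ + ‖Matrix.toEuclideanLin (M ^ 2) x‖ :=
          norm_sub_le _ _
      _ = ‖M.trace‖ * ‖Matrix.toEuclideanLin M x‖ +
          ‖Matrix.toEuclideanLin (M ^ 2) x‖ := by rw [norm_smul]
  set a := ‖Matrix.toEuclideanLin (M ^ 2) x‖ with ha
  set b := ‖Matrix.toEuclideanLin M x‖ with hb
  have hb0 : 0 ≤ b := norm_nonneg _
  have ha0 : 0 ≤ a := norm_nonneg _
  have hmax : max a b ≥ 1 / (C + 1) := by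
    by_contra h
    push_neg at h
    have haC : a < 1 / (C + 1) := lt_of_le_of_lt (le_max_left a b) h
    have hbC : b < 1 / (C + 1) := lt_of_le_of_lt (le_max_right a b) h
    have h2 : ‖M.trace‖ * b ≤ C * b :=
      mul_le_mul_of_nonneg_right htr hb0
    have hC0 : 0 < C + 1 := by linarith
    have h3 : C * b ≤ C * (1 / (C + 1)) :=
      mul_le_mul_of_nonneg_left hbC.le (by linarith)
    have hfrac : C * (1 / (C + 1)) + 1 / (C + 1) = 1 := by field_simp
    linarith
  have hmin : min 1 (1 / C) = 1 / C := min_eq_right (by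
    rw [div_le_one (by linarith)]; exact hC)
  rw [hmin]
  have : (1/2) * (1/C) ≤ 1 / (C + 1) := by
    rw [show (1:ℝ)/2*(1/C) = 1/(2*C) by ring, div_le_div_iff₀ (by linarith) (by linarith)]
    nlinarith
  linarith [hmax]
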